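/- Let f be a nonnegative monotone submodular function on a finite ground set V with f(∅)=0, let c_1,…,c_d : V → (0,1] be cost functions, and let S* be any set with c_j(S*) ≤ 1 for all j ∈ [d]. Let S ⊆ V be a set such that for every element a ∈ S* \ S, there exists j ∈ [d] with Δ_f(a | S) < c_j(a)·φ/(1+d) for some φ > 0. Then f(S* ∪ S) − f(S) < d·φ/(1+d). -/
import Mathlib

theorem stmt_2 {V : Type*} [DecidableEq V]
    (f : Finset V → ℝ)
    (hnonneg : ∀ S : Finset V, 0 ≤ f S)
    (hempty : f ∅ = 0)
    (hmono : ∀ S T : Finset V, S ⊆ T → f S ≤ f T)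
    (hsub : ∀ S T : Finset V, S ⊆ T → ∀ v ∉ T,
      f (insert v T) - f T ≤ f (insert v S) - f S)
    (d : ℕ) (hd : 1 ≤ d) (c : Fin d → V → ℝ)
    (hc : ∀ j v, 0 < c j v ∧ c j v ≤ 1)
    (Sstar : Finset V) (hfeas : ∀ j, ∑ v ∈ Sstar, c j v ≤ 1)
    (φ : ℝ) (hφ : 0 < φ)
    (S : Finset V)
    (hfail : ∀ a ∈ Sstar \ S,
      ∃ j, f (insert a S) - f S < c j a * φ / (1 + d)) :
    f (Sstar ∪ S) - f S < d * φ / (1 + d) := by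
  classical
  have hdpos : (0:ℝ) < 1 + d := by positivity
  have hRHSpos : 0 < d * φ / (1 + d) := by
    have : (0:ℝ) < d := by exact_mod_cast hd
    positivity
  -- key submodularity bound
  have key : ∀ T : Finset V, f (T ∪ S) - f S ≤ ∑ a ∈ T \ S, (f (insert a S) - f S) := by
    intro T
    induction T using Finset.induction_on with
    | empty => simp
    | @insert a T haT ih =>
      by_cases haS : a ∈ S
      · have h1 : insert a T ∪ S = T ∪ S := by
          ext x; simp only [Finset.mem_insert, Finset.mem_union]
          constructor
          · rintro ((rfl | h) | h) <;> tauto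
          · tauto
        have h2 : insert a T \ S = T \ S := by
          ext x; simp only [Finset.mem_insert, Finset.mem_sdiff]
          constructor
          · rintro ⟨rfl | h, hx⟩
            · exact absurd haS hx
            · exact ⟨h, hx⟩
          · rintro ⟨h, hx⟩; exact ⟨Or.inr h, hx⟩
        rw [h1, h2]; exact ih
      · have hins : insert a T ∪ S = insert a (T ∪ S) := by
          ext x; simp only [Finset.mem_insert, Finset.mem_union]; tauto
        have hna : a ∉ T ∪ S := by simp [haT, haS]
        have hsubS : S ⊆ T ∪ S := Finset.subset_union_right
        have hstep := hsub S (T ∪ S) hsubS a hna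
        have h2 : insert a T \ S = insert a (T \ S) := by
          ext x; simp only [Finset.mem_insert, Finset.mem_sdiff]
          constructor
          · rintro ⟨rfl | h, hx⟩ <;> tauto
          · rintro (rfl | ⟨h, hx⟩) <;> tauto
        have hnaTS : a ∉ T \ S := by simp [haT]
        rw [hins, h2, Finset.sum_insert hnaTS]
        linarith
  by_cases hne : (Sstar \ S).Nonempty
  · -- choose witness index for each element
    have hj : ∀ a, ∃ j : Fin d, a ∈ Sstar \ S → f (insert a S) - f S < c j a * φ / (1 + d) := by
      intro a
      by_cases ha : a ∈ Sstar \ S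
      · obtain ⟨j, hj⟩ := hfail a ha
        exact ⟨j, fun _ => hj⟩
      · exact ⟨⟨0, hd⟩, fun h => absurd h ha⟩
    choose w hw using hj
    have h1 : f (Sstar ∪ S) - f S ≤ ∑ a ∈ Sstar \ S, (f (insert a S) - f S) := key Sstar
    have h2 : ∑ a ∈ Sstar \ S, (f (insert a S) - f S)
        < ∑ a ∈ Sstar \ S, c (w a) a * φ / (1 + d) :=
      Finset.sum_lt_sum_of_nonempty hne (fun a ha => hw a ha)
    have h3 : ∑ a ∈ Sstar \ S, c (w a) a * φ / (1 + d)
        = (∑ a ∈ Sstar \ S, c (w a) a) * φ / (1 + d) := by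
      simp only [div_eq_mul_inv, ← Finset.sum_mul]
    have h4 : ∑ a ∈ Sstar \ S, c (w a) a ≤ (d : ℝ) := by
      have hfib : ∑ a ∈ Sstar \ S, c (w a) a
          = ∑ j : Fin d, ∑ a ∈ (Sstar \ S).filter (fun a => w a = j), c (w a) a :=
        (Finset.sum_fiberwise (Sstar \ S) w (fun a => c (w a) a)).symm
      rw [hfib]
      calc ∑ j : Fin d, ∑ a ∈ (Sstar \ S).filter (fun a => w a = j), c (w a) a
          ≤ ∑ j : Fin d, (1:ℝ) := by
            apply Finset.sum_le_sum
            intro j _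
            have heq : ∑ a ∈ (Sstar \ S).filter (fun a => w a = j), c (w a) a
                = ∑ a ∈ (Sstar \ S).filter (fun a => w a = j), c j a := by
              apply Finset.sum_congr rfl
              intro a ha
              rw [(Finset.mem_filter.mp ha).2]
            rw [heq]
            calc ∑ a ∈ (Sstar \ S).filter (fun a => w a = j), c j a
                ≤ ∑ a ∈ Sstar, c j a := by
                  apply Finset.sum_le_sum_of_subset_of_nonneg
                  · intro x hx
                    exact (Finset.mem_sdiff.mp (Finset.mem_filter.mp hx).1).1
                  · intro x _ _; exact (hc j x).1.le
              _ ≤ 1 := hfeas j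
        _ = (d : ℝ) := by simp
    have h5 : (∑ a ∈ Sstar \ S, c (w a) a) * φ / (1 + d) ≤ (d:ℝ) * φ / (1 + d) := by
      gcongr
    linarith
  · have hsub' : Sstar ⊆ S := by
      intro x hx
      by_contra hxs
      exact hne ⟨x, Finset.mem_sdiff.mpr ⟨hx, hxs⟩⟩
    have : Sstar ∪ S = S := Finset.union_eq_right.mpr hsub'
    rw [this]
    simpa using hRHSpos
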